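/- Let A be maximally monotone, L_A-Lipschitz (single-valued) and μ_A-strongly monotone on H, B maximally monotone, and C β-cocoercive. Let ε ∈ (0,1), γ ∈ (0, 2βε), α = 1/(2−ε), λ ∈ (0, 1/α), T the three-operator splitting operator with parameter γ, z* ∈ Fix T, and z⁺ = (1−λ)z + λTz. Then there is a constant c(λ) := (λ/3)·min{2μ_Aγ/(1+γL_A)², (λ/4)(1/(αλ) − 1), (2β − γ/ε)/γ} ∈ [0,1] such that ‖z⁺ − z*‖ ≤ (1 − c(λ))^{1/2} ‖z − z*‖. -/

import Mathlib

open scoped InnerProductSpace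

set_option maxHeartbeats 2000000 in
/-- Linear convergence of one relaxed step of the three-operator splitting when
`A` is single-valued, `L_A`-Lipschitz and `μ_A`-strongly monotone:
`‖z⁺ - z*‖ ≤ (1 - c(λ))^{1/2}‖z - z*‖` with
`c(λ) = (λ/3)·min{2μ_Aγ/(1+γL_A)², (λ/4)(1/(αλ) - 1), (2β - γ/ε)/γ} ∈ [0,1]`. -/
theorem linear_convergence_A_lipschitz_strongly_monotone
    {H : Type*} [NormedAddCommGroup H] [InnerProductSpace ℝ H] [CompleteSpace H]
    (A : H → H) (B : H → Set H) (C : H → H) (β ε γ α lam μA LA : ℝ)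
    (hβ : 0 < β) (hε : ε ∈ Set.Ioo (0 : ℝ) 1) (hγ : γ ∈ Set.Ioo 0 (2 * β * ε))
    (hα : α = 1 / (2 - ε)) (hlam : lam ∈ Set.Ioo 0 (1 / α))
    (hμA : 0 ≤ μA) (hLA : 0 ≤ LA)
    (hAstrong : ∀ x y, μA * ‖x - y‖ ^ 2 ≤ ⟪A x - A y, x - y⟫_ℝ)
    (hALip : ∀ x y, ‖A x - A y‖ ≤ LA * ‖x - y‖)
    (hBmono : ∀ x y u v, u ∈ B x → v ∈ B y → 0 ≤ ⟪u - v, x - y⟫_ℝ)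
    (hC : ∀ x y, β * ‖C x - C y‖ ^ 2 ≤ ⟪C x - C y, x - y⟫_ℝ)
    (JA JB : H → H)
    (hJA : ∀ z, JA z + γ • A (JA z) = z)
    (hJB : ∀ z x, JB z = x ↔ γ⁻¹ • (z - x) ∈ B x)
    (T : H → H)
    (hT : ∀ z, T z = z - JB z + JA ((2 : ℝ) • JB z - z - γ • C (JB z)))
    (zs : H) (hfix : T zs = zs)
    (z zp : H) (hzp : zp = (1 - lam) • z + lam • T z) :
    let c := (lam / 3) *
      min (2 * μA * γ / (1 + γ * LA) ^ 2)
        (min ((lam / 4) * (1 / (α * lam) - 1)) ((2 * β - γ / ε) / γ))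
    c ∈ Set.Icc (0 : ℝ) 1 ∧ ‖zp - zs‖ ≤ Real.sqrt (1 - c) * ‖z - zs‖ := by
  intro c
  obtain ⟨hε0, hε1⟩ := hε
  obtain ⟨hγ0, hγ2⟩ := hγ
  obtain ⟨hlam0, hlam1⟩ := hlam
  have h2ε : (0:ℝ) < 2 - ε := by linarith
  have hα0 : 0 < α := by rw [hα]; positivity
  have hiα : 1/α = 2 - ε := by rw [hα]; field_simp
  have hαlam : α * lam ≤ 1 := by
    rw [lt_div_iff₀ hα0] at hlam1; nlinarith
  have hαlam0 : 0 < α * lam := by positivity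
  -- the min
  set m := min (2 * μA * γ / (1 + γ * LA) ^ 2)
        (min ((lam / 4) * (1 / (α * lam) - 1)) ((2 * β - γ / ε) / γ)) with hm
  have hm1 : m ≤ 2 * μA * γ / (1 + γ * LA) ^ 2 := min_le_left _ _
  have hm2 : m ≤ (lam / 4) * (1 / (α * lam) - 1) :=
    le_trans (min_le_right _ _) (min_le_left _ _)
  have hm3 : m ≤ (2 * β - γ / ε) / γ := le_trans (min_le_right _ _) (min_le_right _ _)
  have hinv1 : 1 ≤ 1 / (α * lam) := by
    rw [le_div_iff₀ hαlam0]; linarith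
  have hγε : γ / ε < 2 * β := by
    rw [div_lt_iff₀ hε0]; linarith
  have hm0 : 0 ≤ m := by
    refine le_min (by positivity) (le_min ?_ ?_)
    · have : 0 ≤ 1 / (α * lam) - 1 := by linarith
      positivity
    · apply div_nonneg (by linarith) hγ0.le
  have hc0 : 0 ≤ c := by
    have : c = lam / 3 * m := rfl
    rw [this]; positivity
  have hαε : α * (2 - ε) = 1 := by rw [hα]; field_simp
  have hαhalf : 1/2 < α := by nlinarith [hαε, h2ε, hε0]
  have hc1 : c ≤ 1 := by
    have hlam2 : lam < 2 := by nlinarith [hlam1, hαhalf, hlam0]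
    have h1 : c ≤ lam / 3 * ((lam / 4) * (1 / (α * lam) - 1)) := by
      have : c = lam / 3 * m := rfl
      rw [this]
      exact mul_le_mul_of_nonneg_left hm2 (by positivity)
    have h2 : lam / 3 * ((lam / 4) * (1 / (α * lam) - 1)) = (lam / α - lam^2) / 12 := by
      field_simp
      ring
    have h3 : lam / α = lam * (2 - ε) := by
      rw [div_eq_mul_inv, ← one_div, hiα]
    linarith [h1, h2, h3, sq_nonneg lam, hlam2, mul_nonneg hlam0.le hε0.le]
  have hcm : c = lam / 3 * m := rfl
  clear_value c m
  refine ⟨⟨hc0, hc1⟩, ?_⟩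
  -- notation
  set xB := JB z with hxB
  set xs := JB zs with hxs
  set xA := JA ((2 : ℝ) • xB - z - γ • C xB) with hxA
  -- the fixed point satisfies JA (2 xs - zs - γ C xs) = xs
  have hfixA : JA ((2 : ℝ) • xs - zs - γ • C xs) = xs := by
    have h := hT zs
    rw [hfix] at h
    have : zs = zs - xs + JA ((2 : ℝ) • xs - zs - γ • C xs) := h
    linear_combination (norm := module) -this
  -- resolvent identities for A
  have hA1 : xA + γ • A xA = (2 : ℝ) • xB - z - γ • C xB := hJA _
  have hA2 : xs + γ • A xs = (2 : ℝ) • xs - zs - γ • C xs := by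
    have h := hJA ((2 : ℝ) • xs - zs - γ • C xs)
    rwa [hfixA] at h
  -- B monotonicity
  have hB1 : γ⁻¹ • (z - xB) ∈ B xB := (hJB z xB).mp hxB.symm
  have hB2 : γ⁻¹ • (zs - xs) ∈ B xs := (hJB zs xs).mp hxs.symm
  have hBm0 : 0 ≤ ⟪γ⁻¹ • (z - xB) - γ⁻¹ • (zs - xs), xB - xs⟫_ℝ := hBmono _ _ _ _ hB1 hB2
  -- abbreviations
  set u := xB - xs with hu
  set v := xA - xs with hv
  set w := C xB - C xs with hw
  set e := z - zs with he
  set a := A xA - A xs with ha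
  have hBs : 0 ≤ ⟪e - u, u⟫_ℝ := by
    have hrw : γ⁻¹ • (z - xB) - γ⁻¹ • (zs - xs) = γ⁻¹ • (e - u) := by
      rw [he, hu]; module
    rw [hrw, real_inner_smul_left] at hBm0
    exact (mul_nonneg_iff_of_pos_left (inv_pos.mpr hγ0)).mp hBm0
  have hkey : γ • a = (2 : ℝ) • u - e - γ • w - v := by
    rw [ha, hu, he, hw, hv]
    linear_combination (norm := module) hA1 - hA2
  have hAs : μA * ‖v‖ ^ 2 ≤ ⟪a, v⟫_ℝ := hAstrong xA xs
  have hCs : β * ‖w‖ ^ 2 ≤ ⟪w, u⟫_ℝ := hC xB xs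
  have haLip : ‖a‖ ≤ LA * ‖v‖ := hALip xA xs
  -- relaxed step algebra
  have hzp' : zp - zs = e + lam • (v - u) := by
    rw [hzp, hT z, ← hxB, ← hxA, he, hv, hu]; module
  have hzz : z - zp = lam • (u - v) := by
    rw [hzp, hT z, ← hxB, ← hxA, hu, hv]; module
  have hef : e = (v - γ • a) + ((2 : ℝ) • (u - v)) + (-γ) • w := by
    rw [he, hv, ha, hu, hw]
    linear_combination (norm := module) hA1 - hA2
  clear_value xB xs xA u v w e a
  -- scalar abbreviations for inner products
  have hAv : γ * (μA * ‖v‖ ^ 2) ≤ ⟪(2 : ℝ) • u - e - γ • w - v, v⟫_ℝ := by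
    rw [← hkey, real_inner_smul_left]
    exact mul_le_mul_of_nonneg_left hAs hγ0.le
  have expand1 : ⟪(2 : ℝ) • u - e - γ • w - v, v⟫_ℝ
      = 2 * ⟪u, v⟫_ℝ - ⟪e, v⟫_ℝ - γ * ⟪w, v⟫_ℝ - ⟪v, v⟫_ℝ := by
    simp [inner_sub_left, real_inner_smul_left]
  have expand2 : ⟪e - u, u⟫_ℝ = ⟪e, u⟫_ℝ - ⟪u, u⟫_ℝ := by
    simp [inner_sub_left]
  have expand4 : ‖u - v‖ ^ 2 = ⟪u, u⟫_ℝ - 2 * ⟪u, v⟫_ℝ + ⟪v, v⟫_ℝ := by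
    rw [← real_inner_self_eq_norm_sq]
    simp only [inner_sub_left, inner_sub_right, real_inner_comm v u]
    ring
  have hVv : ‖v‖ ^ 2 = ⟪v, v⟫_ℝ := (real_inner_self_eq_norm_sq v).symm
  have hUu : ‖u‖ ^ 2 = ⟪u, u⟫_ℝ := (real_inner_self_eq_norm_sq u).symm
  have hWw : ‖w‖ ^ 2 = ⟪w, w⟫_ℝ := (real_inner_self_eq_norm_sq w).symm
  -- Young's inequality step
  have hyoung : 2 * γ * (⟪w, u⟫_ℝ - ⟪w, v⟫_ℝ) ≤ ε * ‖u - v‖ ^ 2 + γ ^ 2 / ε * ‖w‖ ^ 2 := by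
    have hcs : ⟪w, u - v⟫_ℝ ≤ ‖w‖ * ‖u - v‖ := real_inner_le_norm w (u - v)
    have hcs' : ⟪w, u⟫_ℝ - ⟪w, v⟫_ℝ ≤ ‖w‖ * ‖u - v‖ := by
      rwa [inner_sub_right] at hcs
    have hid : (ε * ‖u - v‖ - γ * ‖w‖) ^ 2 / ε
        = ε * ‖u - v‖ ^ 2 - 2 * γ * (‖w‖ * ‖u - v‖) + γ ^ 2 / ε * ‖w‖ ^ 2 := by
      field_simp
      ring
    have hnn : 0 ≤ (ε * ‖u - v‖ - γ * ‖w‖) ^ 2 / ε := by positivity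
    have hcs2 : 2 * γ * (⟪w, u⟫_ℝ - ⟪w, v⟫_ℝ) ≤ 2 * γ * (‖w‖ * ‖u - v‖) :=
      mul_le_mul_of_nonneg_left hcs' (by positivity)
    linarith [hcs2, hid, hnn]
  -- the core inequality S ≤ 0
  have hS : 2 * (⟪e, v⟫_ℝ - ⟪e, u⟫_ℝ) + (2 - ε) * ‖u - v‖ ^ 2
      + 2 * γ * (μA * ‖v‖ ^ 2) + γ * (2 * β - γ / ε) * ‖w‖ ^ 2 ≤ 0 := by
    have hCs' : 2 * γ * (β * ‖w‖ ^ 2) ≤ 2 * γ * ⟪w, u⟫_ℝ :=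
      mul_le_mul_of_nonneg_left hCs (by positivity)
    rw [expand1] at hAv
    rw [expand2] at hBs
    have hdist : γ * (2 * β - γ / ε) * ‖w‖ ^ 2
        = 2 * γ * (β * ‖w‖ ^ 2) - γ ^ 2 / ε * ‖w‖ ^ 2 := by ring
    linarith [hAv, hBs, hCs', hyoung, expand4]
  -- lower bound
  have hcoef : (1 / (lam * α) - 1) * lam ^ 2 = (2 - ε) * lam - lam ^ 2 := by
    rw [hα]; field_simp
  have hnzp : ‖zp - zs‖ ^ 2 = ⟪e, e⟫_ℝ + 2 * lam * (⟪e, v⟫_ℝ - ⟪e, u⟫_ℝ)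
      + lam ^ 2 * ‖u - v‖ ^ 2 := by
    rw [hzp', ← real_inner_self_eq_norm_sq]
    simp only [inner_add_left, inner_add_right, inner_sub_left, inner_sub_right,
      real_inner_smul_left, real_inner_smul_right, real_inner_comm u e, real_inner_comm v e,
      expand4, real_inner_comm v u]
    ring
  have hnzz : ‖z - zp‖ ^ 2 = lam ^ 2 * ‖u - v‖ ^ 2 := by
    rw [hzz, norm_smul, mul_pow]
    simp [abs_of_pos hlam0]
  have hEe : ‖z - zs‖ ^ 2 = ⟪e, e⟫_ℝ := by rw [he, real_inner_self_eq_norm_sq]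
  have hlamS : lam * (2 * (⟪e, v⟫_ℝ - ⟪e, u⟫_ℝ) + (2 - ε) * ‖u - v‖ ^ 2
      + 2 * γ * (μA * ‖v‖ ^ 2) + γ * (2 * β - γ / ε) * ‖w‖ ^ 2) ≤ 0 :=
    mul_nonpos_of_nonneg_of_nonpos hlam0.le hS
  have hlow : ‖zp - zs‖ ^ 2 + (1 / (lam * α) - 1) * ‖z - zp‖ ^ 2
      + 2 * γ * lam * (μA * ‖v‖ ^ 2) + γ * lam * (2 * β - γ / ε) * ‖w‖ ^ 2
      ≤ ‖z - zs‖ ^ 2 := by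
    have h1 : (1 / (lam * α) - 1) * ‖z - zp‖ ^ 2
        = ((2 - ε) * lam - lam ^ 2) * ‖u - v‖ ^ 2 := by
      rw [hnzz, ← mul_assoc, hcoef]
    rw [hnzp, h1, hEe]
    linarith [hlamS]
  -- upper bound
  have hnorm : ‖e‖ ≤ (1 + γ * LA) * ‖v‖ + 2 * ‖u - v‖ + γ * ‖w‖ := by
    calc ‖e‖ = ‖(v - γ • a) + ((2 : ℝ) • (u - v)) + (-γ) • w‖ := by rw [← hef]
      _ ≤ ‖v - γ • a‖ + ‖(2 : ℝ) • (u - v)‖ + ‖(-γ) • w‖ := norm_add₃_le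
      _ ≤ (‖v‖ + γ * ‖a‖) + 2 * ‖u - v‖ + γ * ‖w‖ := by
          gcongr ?_ + ?_ + ?_
          · calc ‖v - γ • a‖ ≤ ‖v‖ + ‖γ • a‖ := norm_sub_le _ _
              _ = ‖v‖ + γ * ‖a‖ := by rw [norm_smul, Real.norm_of_nonneg hγ0.le]
          · rw [norm_smul]; simp
          · rw [norm_smul, Real.norm_eq_abs, abs_neg, abs_of_pos hγ0]
      _ ≤ (1 + γ * LA) * ‖v‖ + 2 * ‖u - v‖ + γ * ‖w‖ := by
          have := mul_le_mul_of_nonneg_left haLip hγ0.le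
          linarith
  have hup : ‖z - zs‖ ^ 2 ≤ 3 * ((1 + γ * LA) ^ 2 * ‖v‖ ^ 2 + γ ^ 2 * ‖w‖ ^ 2
      + 4 * ‖u - v‖ ^ 2) := by
    have hE : ‖z - zs‖ = ‖e‖ := by rw [he]
    rw [hE]
    have h2 : ‖e‖ ^ 2 ≤ ((1 + γ * LA) * ‖v‖ + 2 * ‖u - v‖ + γ * ‖w‖) ^ 2 :=
      pow_le_pow_left₀ (norm_nonneg e) hnorm 2
    linarith [h2, sq_nonneg ((1 + γ * LA) * ‖v‖ - 2 * ‖u - v‖),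
      sq_nonneg ((1 + γ * LA) * ‖v‖ - γ * ‖w‖), sq_nonneg (2 * ‖u - v‖ - γ * ‖w‖)]
  -- combine
  have hpos1 : (0:ℝ) < (1 + γ * LA) ^ 2 := by positivity
  have hc3 : m * (1 + γ * LA) ^ 2 ≤ 2 * μA * γ := by
    rw [← le_div_iff₀ hpos1]; exact hm1
  have hc4 : m * γ ≤ 2 * β - γ / ε := by
    rw [← le_div_iff₀ hγ0]; exact hm3
  have hc5 : 4 * m ≤ lam * (1 / (α * lam) - 1) := by linarith [hm2]
  have hmain : ‖zp - zs‖ ^ 2 ≤ (1 - c) * ‖z - zs‖ ^ 2 := by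
    have hcE : c * ‖z - zs‖ ^ 2 ≤ (1 / (lam * α) - 1) * ‖z - zp‖ ^ 2
        + 2 * γ * lam * (μA * ‖v‖ ^ 2) + γ * lam * (2 * β - γ / ε) * ‖w‖ ^ 2 := by
      have hcdef : c = lam / 3 * m := hcm
      have t0 : c * ‖z - zs‖ ^ 2 ≤ lam * m * ((1 + γ * LA) ^ 2 * ‖v‖ ^ 2
          + γ ^ 2 * ‖w‖ ^ 2 + 4 * ‖u - v‖ ^ 2) := by
        calc c * ‖z - zs‖ ^ 2 ≤ c * (3 * ((1 + γ * LA) ^ 2 * ‖v‖ ^ 2 + γ ^ 2 * ‖w‖ ^ 2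
              + 4 * ‖u - v‖ ^ 2)) := mul_le_mul_of_nonneg_left hup hc0
          _ = lam * m * ((1 + γ * LA) ^ 2 * ‖v‖ ^ 2 + γ ^ 2 * ‖w‖ ^ 2 + 4 * ‖u - v‖ ^ 2) := by
              rw [hcdef]; ring
      have t1 : lam * (m * (1 + γ * LA) ^ 2) * ‖v‖ ^ 2 ≤ lam * (2 * μA * γ) * ‖v‖ ^ 2 :=
        mul_le_mul_of_nonneg_right (mul_le_mul_of_nonneg_left hc3 hlam0.le) (sq_nonneg _)
      have t2 : lam * (m * γ) * (γ * ‖w‖ ^ 2) ≤ lam * (2 * β - γ / ε) * (γ * ‖w‖ ^ 2) :=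
        mul_le_mul_of_nonneg_right (mul_le_mul_of_nonneg_left hc4 hlam0.le) (by positivity)
      have t3 : lam * (4 * m) * ‖u - v‖ ^ 2 ≤ lam * (lam * (1 / (α * lam) - 1)) * ‖u - v‖ ^ 2 :=
        mul_le_mul_of_nonneg_right (mul_le_mul_of_nonneg_left hc5 hlam0.le) (sq_nonneg _)
      have hcoef2 : (1 / (lam * α) - 1) * ‖z - zp‖ ^ 2
          = lam * (lam * (1 / (α * lam) - 1)) * ‖u - v‖ ^ 2 := by
        rw [hnzz, mul_comm lam α]
        ring
      rw [hcoef2]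
      linarith [t0, t1, t2, t3]
    linarith [hlow, hcE]
  have h1c : 0 ≤ 1 - c := by linarith
  rw [he]
  calc ‖zp - zs‖ = Real.sqrt (‖zp - zs‖ ^ 2) := (Real.sqrt_sq (norm_nonneg _)).symm
    _ ≤ Real.sqrt ((1 - c) * ‖z - zs‖ ^ 2) := Real.sqrt_le_sqrt hmain
    _ = Real.sqrt (1 - c) * ‖z - zs‖ := by
        rw [Real.sqrt_mul h1c, Real.sqrt_sq (norm_nonneg _)]
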